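/- For any positive integers s and t and any real numbers a, b > 0, let Q be the Cartesian product of the vertex set of a regular (s−1)-dimensional simplex with side length a and the vertex set of a regular (t−1)-dimensional simplex with side length b. Then there exists a constant C (depending only on s and t) such that for every positive integer r, every coloring of Euclidean space E^{C·r} with r colors contains a monochromatic congruent copy of Q or a rainbow congruent copy of Q. -/

import Mathlib

/-- `f` maps the configuration `K ⊆ E^m` to a congruent copy of itself in `E^d`: it preserves
all pairwise distances between points of `K` (hence is injective on `K`). -/
def IsCongruentCopy {m d : ℕ} (K : Set (EuclideanSpace ℝ (Fin m)))
    (f : EuclideanSpace ℝ (Fin m) → EuclideanSpace ℝ (Fin d)) : Prop :=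
  ∀ x ∈ K, ∀ y ∈ K, dist (f x) (f y) = dist x y

/-- The coloring `χ` of `E^d` contains a monochromatic congruent copy of `K ⊆ E^m`. -/
def HasMonoCopy {r m d : ℕ} (χ : EuclideanSpace ℝ (Fin d) → Fin r)
    (K : Set (EuclideanSpace ℝ (Fin m))) : Prop :=
  ∃ f, IsCongruentCopy K f ∧ ∃ col : Fin r, ∀ x ∈ K, χ (f x) = col

/-- The coloring `χ` of `E^d` contains a rainbow congruent copy of `K ⊆ E^m`. -/
def HasRainbowCopy {r m d : ℕ} (χ : EuclideanSpace ℝ (Fin d) → Fin r)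
    (K : Set (EuclideanSpace ℝ (Fin m))) : Prop :=
  ∃ f, IsCongruentCopy K f ∧ ∀ x ∈ K, ∀ y ∈ K, x ≠ y → χ (f x) ≠ χ (f y)

/-- The vertex set of a regular `(s-1)`-dimensional simplex with side length `a`, realized in
`E^s` as the set of points with exactly one nonzero coordinate, equal to `a/√2`. -/
def simplexVertices (s : ℕ) (a : ℝ) : Set (EuclideanSpace ℝ (Fin s)) :=
  Set.range fun i : Fin s => EuclideanSpace.single i (a / Real.sqrt 2)

/-- The Cartesian product `K₁ ∗ K₂ ⊆ E^{m₁+m₂}` of configurations `K₁ ⊆ E^{m₁}` and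
`K₂ ⊆ E^{m₂}`. -/
def cartesianProd {m₁ m₂ : ℕ} (K₁ : Set (EuclideanSpace ℝ (Fin m₁)))
    (K₂ : Set (EuclideanSpace ℝ (Fin m₂))) : Set (EuclideanSpace ℝ (Fin (m₁ + m₂))) :=
  {z | ∃ x ∈ K₁, ∃ y ∈ K₂,
    (∀ i : Fin m₁, z (Fin.castAdd m₂ i) = x i) ∧ (∀ j : Fin m₂, z (Fin.natAdd m₁ j) = y j)}

section AuxGallai

open Finset

lemma sum_card_filter_comm {α β : Type*} (A : Finset α) (B : Finset β)
    (P : α → β → Prop) [∀ a b, Decidable (P a b)] :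
    ∑ a ∈ A, (B.filter (fun b => P a b)).card = ∑ b ∈ B, (A.filter (fun a => P a b)).card := by
  simp_rw [Finset.card_filter]
  exact Finset.sum_comm

/-- Core double-counting lemma: given `X` subsets of `U`, each of density at least `1/D`,
with `X ≥ 2s'D` and `U` large enough, some `s'` of the sets share `t'` common elements. -/
lemma core_lemma {ι γ : Type*} [DecidableEq ι] [DecidableEq γ]
    (A : Finset ι) (U : Finset γ) (S : ι → Finset γ) (D s' t' : ℕ)
    (hD : 1 ≤ D)
    (hSU : ∀ m ∈ A, S m ⊆ U)
    (hSsize : ∀ m ∈ A, U.card ≤ D * (S m).card)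
    (hX : 2 * s' * D ≤ A.card)
    (hs' : 1 ≤ s')
    (hU : 2 * D * ((t' - 1) * (A.card.choose s') + 1) ≤ U.card) :
    ∃ T ⊆ A, T.card = s' ∧ ∃ W ⊆ U, W.card = t' ∧ ∀ m ∈ T, ∀ j ∈ W, j ∈ S m := by
  classical
  set deg : γ → ℕ := fun j => (A.filter (fun m => j ∈ S m)).card with hdeg
  have hsum : ∑ j ∈ U, deg j = ∑ m ∈ A, (S m).card := by
    rw [sum_card_filter_comm U A (fun j m => j ∈ S m)]
    refine Finset.sum_congr rfl (fun m hm => ?_)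
    congr 1
    rw [Finset.filter_mem_eq_inter, Finset.inter_eq_right.2 (hSU m hm)]
  have hlow : A.card * U.card ≤ D * ∑ j ∈ U, deg j := by
    rw [hsum, Finset.mul_sum]
    calc A.card * U.card = ∑ _m ∈ A, U.card := by rw [Finset.sum_const, smul_eq_mul]
      _ ≤ ∑ m ∈ A, D * (S m).card := Finset.sum_le_sum hSsize
  set G : Finset γ := U.filter (fun j => s' ≤ deg j) with hG
  have hsplit := Finset.sum_filter_add_sum_filter_not U (fun j => s' ≤ deg j) deg
  have hs'A : s' ≤ A.card := by
    calc s' = s' * 1 := by ring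
      _ ≤ 2 * s' * D := by nlinarith
      _ ≤ A.card := hX
  have hA1 : 0 < A.card := lt_of_lt_of_le (by omega) hs'A
  have hup : ∑ j ∈ U, deg j ≤ G.card * A.card + U.card * (s' - 1) := by
    rw [← hsplit]
    gcongr ?_ + ?_
    · calc ∑ j ∈ G, deg j ≤ ∑ _j ∈ G, A.card :=
            Finset.sum_le_sum (fun j _ => Finset.card_filter_le _ _)
        _ = G.card * A.card := by rw [Finset.sum_const, smul_eq_mul]
    · calc ∑ j ∈ U.filter (fun j => ¬ s' ≤ deg j), deg j
          ≤ ∑ _j ∈ U.filter (fun j => ¬ s' ≤ deg j), (s' - 1) :=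
            Finset.sum_le_sum (fun j hj => by
              have := (Finset.mem_filter.1 hj).2; omega)
        _ = (U.filter (fun j => ¬ s' ≤ deg j)).card * (s' - 1) := by
            rw [Finset.sum_const, smul_eq_mul]
        _ ≤ U.card * (s' - 1) :=
            Nat.mul_le_mul_right _ (Finset.card_filter_le _ _)
  -- conclude U.card ≤ 2 * D * G.card
  have hUG : U.card ≤ 2 * D * G.card := by
    have h1 : A.card * U.card ≤ D * (G.card * A.card + U.card * (s' - 1)) :=
      hlow.trans (by gcongr)
    have h2 : 2 * (D * (U.card * (s' - 1))) ≤ A.card * U.card := by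
      calc 2 * (D * (U.card * (s' - 1))) = (2 * (s' - 1) * D) * U.card := by ring
        _ ≤ A.card * U.card := by
            apply Nat.mul_le_mul_right
            calc 2 * (s' - 1) * D ≤ 2 * s' * D := by
                  apply Nat.mul_le_mul_right; apply Nat.mul_le_mul_left; omega
              _ ≤ A.card := hX
    have h1' : 2 * (A.card * U.card)
        ≤ 2 * D * (G.card * A.card) + 2 * (D * (U.card * (s' - 1))) := by
      calc 2 * (A.card * U.card) ≤ 2 * (D * (G.card * A.card + U.card * (s' - 1))) := by
            exact Nat.mul_le_mul_left 2 h1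
        _ = 2 * D * (G.card * A.card) + 2 * (D * (U.card * (s' - 1))) := by ring
    have h3 : A.card * U.card ≤ A.card * (2 * D * G.card) := by
      have : A.card * (2 * D * G.card) = 2 * D * (G.card * A.card) := by ring
      omega
    exact Nat.le_of_mul_le_mul_left h3 hA1
  have hGcard : (t' - 1) * (A.card.choose s') + 1 ≤ G.card := by
    have h4 : 2 * D * ((t' - 1) * (A.card.choose s') + 1) ≤ 2 * D * G.card := hU.trans hUG
    exact Nat.le_of_mul_le_mul_left h4 (by omega)
  classical
  set Φ : γ → Finset ι := fun j =>
    if h : ∃ T, T ⊆ A.filter (fun m => j ∈ S m) ∧ T.card = s' then h.choose else ∅ with hΦ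
  have hΦspec : ∀ j ∈ G, Φ j ⊆ A.filter (fun m => j ∈ S m) ∧ (Φ j).card = s' := by
    intro j hj
    have hex : ∃ T, T ⊆ A.filter (fun m => j ∈ S m) ∧ T.card = s' :=
      Finset.exists_subset_card_eq (Finset.mem_filter.1 hj).2
    simp only [hΦ, dif_pos hex]
    exact hex.choose_spec
  have hmaps : ∀ j ∈ G, Φ j ∈ A.powersetCard s' := fun j hj =>
    Finset.mem_powersetCard.2
      ⟨((hΦspec j hj).1).trans (Finset.filter_subset _ _), (hΦspec j hj).2⟩
  have hlt : (A.powersetCard s').card * (t' - 1) < G.card := by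
    rw [Finset.card_powersetCard]
    have := Nat.mul_comm (A.card.choose s') (t' - 1)
    omega
  obtain ⟨T, hTmem, hfib⟩ := Finset.exists_lt_card_fiber_of_mul_lt_card_of_maps_to hmaps hlt
  obtain ⟨W, hWsub, hWcard⟩ :=
    Finset.exists_subset_card_eq (s := G.filter (fun j => Φ j = T)) (n := t') (by omega)
  obtain ⟨hTA, hTcard⟩ := Finset.mem_powersetCard.1 hTmem
  refine ⟨T, hTA, hTcard, W, ?_, hWcard, ?_⟩
  · exact hWsub.trans ((Finset.filter_subset _ _).trans (Finset.filter_subset _ _))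
  · intro m hm j hj
    have hjW := hWsub hj
    have hjG : j ∈ G := Finset.mem_of_mem_filter j hjW
    have hΦj : Φ j = T := (Finset.mem_filter.1 hjW).2
    have : m ∈ A.filter (fun m => j ∈ S m) := (hΦspec j hjG).1 (hΦj ▸ hm)
    exact (Finset.mem_filter.1 this).2

lemma sum_card_filter_comm' {α β : Type*} (A : Finset α) (B : Finset β)
    (P : α → β → Prop) [∀ a b, Decidable (P a b)] :
    ∑ a ∈ A, (B.filter (fun b => P a b)).card = ∑ b ∈ B, (A.filter (fun a => P a b)).card := by
  simp_rw [Finset.card_filter]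
  exact Finset.sum_comm

lemma card_filter_exists_le' {α β : Type*} (A : Finset α) (Y : Finset β)
    (P : α → β → Prop) [∀ a b, Decidable (P a b)] [DecidableEq α] :
    (A.filter (fun x => ∃ y ∈ Y, P x y)).card ≤ ∑ y ∈ Y, (A.filter (fun x => P x y)).card :=
  calc (A.filter (fun x => ∃ y ∈ Y, P x y)).card
      ≤ (Y.biUnion (fun y => A.filter (fun x => P x y))).card := by
        apply Finset.card_le_card; intro x hx; simp only [mem_filter, mem_biUnion] at hx ⊢; tauto
    _ ≤ _ := Finset.card_biUnion_le

lemma greedy_one {ι γ κt : Type*} [DecidableEq ι] [DecidableEq γ] [DecidableEq κt]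
    (c : ι → γ → κt) (R : Finset ι) (Sc : Finset γ) (s : ℕ) (hs : 1 ≤ s)
    (hR2s : 2 * s ≤ R.card)
    (hnonconc : ∀ j ∈ Sc, ∀ v : κt, 4 * s * (R.filter (fun i => c i j = v)).card < R.card) :
    ∀ u, u ≤ s → ∃ I ⊆ R, I.card = u ∧ ∃ J ⊆ Sc, Sc.card ≤ 2^u * J.card ∧
      (∀ j ∈ J, ∀ i ∈ I, ∀ i' ∈ I, i ≠ i' → c i j ≠ c i' j) := by
  intro u
  induction u with
  | zero =>
    intro _
    exact ⟨∅, empty_subset _, card_empty, Sc, Subset.rfl, by simp, by simp⟩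
  | succ u ih =>
    intro hu
    obtain ⟨I, hIR, hIcard, J, hJS, hJcard, hinj⟩ := ih (by omega)
    have hRI : (R \ I).card = R.card - u := by rw [card_sdiff_of_subset hIR, hIcard]
    have hgood : ∃ i ∈ R \ I,
        2 * (J.filter (fun j => ∃ i' ∈ I, c i j = c i' j)).card ≤ J.card := by
      by_contra hcon
      push_neg at hcon
      have k1 : (R.card - u) * (J.card + 1) ≤
          2 * ∑ i ∈ R \ I, (J.filter (fun j => ∃ i' ∈ I, c i j = c i' j)).card := by
        rw [Finset.mul_sum]
        calc (R.card - u) * (J.card + 1) = ∑ _i ∈ R \ I, (J.card + 1) := by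
              rw [Finset.sum_const, smul_eq_mul, hRI]
          _ ≤ _ := Finset.sum_le_sum (fun i hi => by have := hcon i hi; omega)
      have k2 : 4 * s * ∑ i ∈ R \ I, (J.filter (fun j => ∃ i' ∈ I, c i j = c i' j)).card ≤
          J.card * (u * (R.card - 1)) := by
        have e1 : ∑ i ∈ R \ I, (J.filter (fun j => ∃ i' ∈ I, c i j = c i' j)).card
            = ∑ j ∈ J, ((R \ I).filter (fun i => ∃ i' ∈ I, c i j = c i' j)).card :=
          sum_card_filter_comm' (R \ I) J _
        have e2 : ∀ j ∈ J, 4 * s * ((R \ I).filter (fun i => ∃ i' ∈ I, c i j = c i' j)).card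
            ≤ u * (R.card - 1) := by
          intro j hj
          have b1 : ((R \ I).filter (fun i => ∃ i' ∈ I, c i j = c i' j)).card
              ≤ ∑ i' ∈ I, (R.filter (fun i => c i j = c i' j)).card := by
            calc ((R \ I).filter (fun i => ∃ i' ∈ I, c i j = c i' j)).card
                ≤ (R.filter (fun i => ∃ i' ∈ I, c i j = c i' j)).card :=
                  card_le_card (filter_subset_filter _ (sdiff_subset))
              _ ≤ _ := card_filter_exists_le' R I _
          calc 4 * s * ((R \ I).filter (fun i => ∃ i' ∈ I, c i j = c i' j)).card
              ≤ 4 * s * ∑ i' ∈ I, (R.filter (fun i => c i j = c i' j)).card :=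
                Nat.mul_le_mul_left _ b1
            _ = ∑ i' ∈ I, 4 * s * (R.filter (fun i => c i j = c i' j)).card := Finset.mul_sum _ _ _
            _ ≤ ∑ _i' ∈ I, (R.card - 1) := Finset.sum_le_sum (fun i' _ => by
                have := hnonconc j (hJS hj) (c i' j); omega)
            _ = u * (R.card - 1) := by rw [Finset.sum_const, smul_eq_mul, hIcard]
        calc 4 * s * ∑ i ∈ R \ I, (J.filter (fun j => ∃ i' ∈ I, c i j = c i' j)).card
            = ∑ j ∈ J, 4 * s * ((R \ I).filter (fun i => ∃ i' ∈ I, c i j = c i' j)).card := by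
              rw [e1, Finset.mul_sum]
          _ ≤ ∑ _j ∈ J, u * (R.card - 1) := Finset.sum_le_sum e2
          _ = J.card * (u * (R.card - 1)) := by rw [Finset.sum_const, smul_eq_mul]
      -- derive a contradiction
      have hRu : R.card ≥ 2 * u + 2 := by omega
      have hfin : 4 * s * ((R.card - u) * (J.card + 1)) ≤ 2 * (J.card * (u * (R.card - 1))) := by
        calc 4 * s * ((R.card - u) * (J.card + 1))
            ≤ 4 * s * (2 * ∑ i ∈ R \ I, (J.filter (fun j => ∃ i' ∈ I, c i j = c i' j)).card) :=
              Nat.mul_le_mul_left _ k1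
          _ = 2 * (4 * s * ∑ i ∈ R \ I, (J.filter (fun j => ∃ i' ∈ I, c i j = c i' j)).card) := by
              ring
          _ ≤ 2 * (J.card * (u * (R.card - 1))) := Nat.mul_le_mul_left _ k2
      obtain ⟨k, hk⟩ : ∃ k, s = k + 1 := ⟨s - 1, by omega⟩
      subst hk
      set A := R.card - u with hA
      set B := R.card - 1 with hB
      have hA1 : 1 ≤ A := by omega
      have hBA : B ≤ 2 * A := by omega
      have huk : u ≤ k := by omega
      have hstep : 2 * (J.card * (u * B)) ≤ 2 * (J.card * (k * (2 * A))) := by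
        gcongr
      have hfin2 : 4 * (k+1) * (A * (J.card + 1)) ≤ 4 * k * A * J.card := by
        calc 4 * (k+1) * (A * (J.card + 1)) ≤ 2 * (J.card * (u * B)) := hfin
          _ ≤ 2 * (J.card * (k * (2 * A))) := hstep
          _ = 4 * k * A * J.card := by ring
      nlinarith [hfin2, hA1]
    obtain ⟨i, hiRI, hikill⟩ := hgood
    have hiR : i ∈ R := (mem_sdiff.1 hiRI).1
    have hiI : i ∉ I := (mem_sdiff.1 hiRI).2
    set J' := J.filter (fun j => ∀ i' ∈ I, c i j ≠ c i' j) with hJ'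
    have hJ'card : 2 * J'.card ≥ J.card := by
      have hsplit := Finset.card_filter_add_card_filter_not
        (s := J) (p := fun j => ∃ i' ∈ I, c i j = c i' j)
      have heqf : J.filter (fun j => ¬ ∃ i' ∈ I, c i j = c i' j) = J' := by
        ext j
        simp only [hJ', mem_filter]
        constructor
        · rintro ⟨hjJ, h⟩; exact ⟨hjJ, fun i' hi' heq => h ⟨i', hi', heq⟩⟩
        · rintro ⟨hjJ, h⟩; exact ⟨hjJ, fun ⟨i', hi', heq⟩ => h i' hi' heq⟩
      have hcards := congrArg Finset.card heqf
      omega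
    refine ⟨insert i I, insert_subset hiR hIR, by rw [card_insert_of_notMem hiI, hIcard],
      J', (filter_subset _ _).trans hJS, ?_, ?_⟩
    · calc Sc.card ≤ 2^u * J.card := hJcard
        _ ≤ 2^u * (2 * J'.card) := Nat.mul_le_mul_left _ hJ'card
        _ = 2^(u+1) * J'.card := by ring
    · intro j hj i₁ hi₁ i₂ hi₂ hne
      have hjJ : j ∈ J := filter_subset _ _ hj
      have hjprop : ∀ i' ∈ I, c i j ≠ c i' j := (mem_filter.1 hj).2
      rcases mem_insert.1 hi₁ with rfl | hi₁I <;> rcases mem_insert.1 hi₂ with rfl | hi₂I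
      · exact absurd rfl hne
      · exact hjprop i₂ hi₂I
      · exact fun heq => hjprop i₁ hi₁I heq.symm
      · exact hinj j hjJ i₁ hi₁I i₂ hi₂I hne

lemma greedy_two {ι γ : Type*} [DecidableEq ι] [DecidableEq γ] [Fintype γ] {κt : Type*}
    [DecidableEq κt]
    (c : ι → γ → κt) (I : Finset ι) (J3 : Finset γ) (s t N : ℕ)
    (hs : 1 ≤ s) (ht : 1 ≤ t) (hN1 : 1 ≤ N)
    (hIcard : I.card = s)
    (hrow : ∀ i ∈ I, ∀ κ : κt,
      2^(s+2) * s^2 * t * ((univ : Finset γ).filter (fun j => c i j = κ)).card < N)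
    (hJ3 : 3 * N ≤ 2^(s+2) * J3.card) :
    ∀ l, l ≤ t → ∃ Js ⊆ J3, Js.card = l ∧
      ∀ j ∈ Js, ∀ j' ∈ Js, j ≠ j' → ∀ i ∈ I, ∀ i' ∈ I, c i j ≠ c i' j' := by
  intro l
  induction l with
  | zero => intro _; exact ⟨∅, empty_subset _, card_empty, by simp⟩
  | succ l ih =>
    intro hl
    obtain ⟨Js, hJsSub, hJscard, hJsprop⟩ := ih (by omega)
    set P := I ×ˢ (I ×ˢ Js) with hP
    set bad := J3.filter (fun j => ∃ p ∈ P, c p.1 j = c p.2.1 p.2.2) with hbad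
    have hbadcard : 2^(s+2) * bad.card < N := by
      have b1 : bad.card ≤ ∑ p ∈ P, (J3.filter (fun j => c p.1 j = c p.2.1 p.2.2)).card := by
        calc bad.card ≤ (P.biUnion (fun p => J3.filter (fun j => c p.1 j = c p.2.1 p.2.2))).card := by
              apply card_le_card
              intro j hj
              simp only [hbad, mem_filter, mem_biUnion] at hj ⊢
              tauto
          _ ≤ _ := Finset.card_biUnion_le
      have b2 : 2^(s+2) * s^2 * t * bad.card ≤ s^2 * (t-1) * (N-1) := by
        calc 2^(s+2) * s^2 * t * bad.card
            ≤ 2^(s+2) * s^2 * t * ∑ p ∈ P, (J3.filter (fun j => c p.1 j = c p.2.1 p.2.2)).card :=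
              Nat.mul_le_mul_left _ b1
          _ = ∑ p ∈ P, 2^(s+2) * s^2 * t * (J3.filter (fun j => c p.1 j = c p.2.1 p.2.2)).card :=
              Finset.mul_sum _ _ _
          _ ≤ ∑ _p ∈ P, (N-1) := by
              apply Finset.sum_le_sum
              intro p hp
              simp only [hP, mem_product] at hp
              have hple : (J3.filter (fun j => c p.1 j = c p.2.1 p.2.2)).card
                  ≤ ((univ : Finset γ).filter (fun j => c p.1 j = c p.2.1 p.2.2)).card :=
                card_le_card (filter_subset_filter _ (subset_univ _))
              have := hrow p.1 hp.1 (c p.2.1 p.2.2)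
              have : 2^(s+2) * s^2 * t * (J3.filter (fun j => c p.1 j = c p.2.1 p.2.2)).card < N :=
                lt_of_le_of_lt (Nat.mul_le_mul_left _ hple) this
              omega
          _ = P.card * (N-1) := by rw [Finset.sum_const, smul_eq_mul]
          _ = s * (s * l) * (N-1) := by
              rw [hP, Finset.card_product, Finset.card_product, hIcard, hJscard]
          _ ≤ s^2 * (t-1) * (N-1) := by
              have : s * (s * l) ≤ s^2 * (t-1) := by
                have : l ≤ t - 1 := by omega
                calc s * (s * l) = s^2 * l := by ring
                  _ ≤ s^2 * (t-1) := Nat.mul_le_mul_left _ this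
              exact Nat.mul_le_mul_right _ this
      -- cancel s^2 * t
      have b3 : s^2 * t * (2^(s+2) * bad.card) < s^2 * t * N := by
        calc s^2 * t * (2^(s+2) * bad.card) = 2^(s+2) * s^2 * t * bad.card := by ring
          _ ≤ s^2 * (t-1) * (N-1) := b2
          _ < s^2 * t * N := by
              have hs2 : 1 ≤ s^2 := Nat.one_le_pow 2 s (by omega)
              have h1 : s^2 * (t-1) * (N-1) ≤ s^2 * t * (N-1) := by
                apply Nat.mul_le_mul_right
                apply Nat.mul_le_mul_left
                omega
              have hpos : 0 < s^2 * t := by positivity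
              have h2 : s^2 * t * (N-1) < s^2 * t * N :=
                mul_lt_mul_of_pos_left (by omega) hpos
              omega
      exact Nat.lt_of_mul_lt_mul_left b3
    have hbadJ3 : bad.card < J3.card := by
      have : 2^(s+2) * bad.card < 2^(s+2) * J3.card := by omega
      exact Nat.lt_of_mul_lt_mul_left this
    have hnotsub : ¬ J3 ⊆ bad := fun h => absurd (card_le_card h) (by omega)
    obtain ⟨j, hjJ3, hjbad⟩ := Finset.not_subset.1 hnotsub
    have hIne : I.Nonempty := Finset.card_pos.1 (by omega)
    obtain ⟨i0, hi0⟩ := hIne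
    have hjJs : j ∉ Js := by
      intro hjJs
      exact hjbad (Finset.mem_filter.2 ⟨hjJ3, ⟨(i0, (i0, j)), by
        simp only [hP, mem_product]; exact ⟨hi0, hi0, hjJs⟩, rfl⟩⟩)
    refine ⟨insert j Js, insert_subset hjJ3 hJsSub,
      by rw [card_insert_of_notMem hjJs, hJscard], ?_⟩
    intro j₁ hj₁ j₂ hj₂ hne i hi i' hi'
    rcases mem_insert.1 hj₁ with rfl | hj₁o <;> rcases mem_insert.1 hj₂ with rfl | hj₂o
    · exact absurd rfl hne
    · intro heq
      exact hjbad (Finset.mem_filter.2 ⟨hjJ3, ⟨(i, (i', j₂)), by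
        simp only [hP, mem_product]; exact ⟨hi, hi', hj₂o⟩, heq⟩⟩)
    · intro heq
      exact hjbad (Finset.mem_filter.2 ⟨hjJ3, ⟨(i', (i, j₁)), by
        simp only [hP, mem_product]; exact ⟨hi', hi, hj₁o⟩, heq.symm⟩⟩)
    · exact hJsprop j₁ hj₁o j₂ hj₂o hne i hi i' hi'

/-- If at least `X * r` rows are `κ`-concentrated for some of the `r` colors, then by
pigeonhole `X` of them share the same concentrated color, and the core double counting
lemma yields a monochromatic `s' × t'` grid. -/
lemma mono_of_many_concentrated {ι γ κt : Type*} [DecidableEq ι] [DecidableEq γ]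
    [Fintype κt] [DecidableEq κt] [Nonempty κt]
    (c : ι → γ → κt) (U : Finset γ) (CB : Finset ι) (D s' t' X : ℕ)
    (hD : 1 ≤ D) (hs' : 1 ≤ s') (hr : 1 ≤ Fintype.card κt)
    (hX1 : 2 * s' * D ≤ X)
    (hCB : ∀ m ∈ CB, ∃ κ : κt, U.card ≤ D * (U.filter (fun j => c m j = κ)).card)
    (hCBcard : X * Fintype.card κt ≤ CB.card)
    (hU : 2 * D * ((t' - 1) * (X.choose s') + 1) ≤ U.card) :
    ∃ T ⊆ CB, T.card = s' ∧ ∃ W ⊆ U, W.card = t' ∧ ∃ κ : κt,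
      ∀ m ∈ T, ∀ j ∈ W, c m j = κ := by
  classical
  set kf : ι → κt := fun m =>
    if h : ∃ κ : κt, U.card ≤ D * (U.filter (fun j => c m j = κ)).card then h.choose
    else Classical.arbitrary κt with hkf
  have hmaps : ∀ m ∈ CB, kf m ∈ (univ : Finset κt) := fun m _ => mem_univ _
  have hlt : (univ : Finset κt).card * (X - 1) < CB.card := by
    rw [card_univ]
    have hX0 : 1 ≤ X := le_trans (Nat.mul_pos (Nat.mul_pos (by omega : 0 < 2) hs') hD) hX1
    have h1 : Fintype.card κt * (X - 1) < Fintype.card κt * X :=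
      mul_lt_mul_of_pos_left (by omega) (by omega)
    have h2 : Fintype.card κt * X = X * Fintype.card κt := Nat.mul_comm _ _
    omega
  obtain ⟨κ0, _, hfib⟩ := Finset.exists_lt_card_fiber_of_mul_lt_card_of_maps_to hmaps hlt
  have hfibX : X ≤ (CB.filter (fun m => kf m = κ0)).card := by omega
  obtain ⟨A, hAsub, hAcard⟩ := Finset.exists_subset_card_eq hfibX
  have hAspec : ∀ m ∈ A, U.card ≤ D * (U.filter (fun j => c m j = κ0)).card := by
    intro m hm
    have hmfil := hAsub hm
    have hmCB : m ∈ CB := mem_of_mem_filter _ hmfil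
    have hmk : kf m = κ0 := (mem_filter.1 hmfil).2
    have hex := hCB m hmCB
    rw [hkf] at hmk
    simp only [dif_pos hex] at hmk
    have := hex.choose_spec
    rwa [hmk] at this
  obtain ⟨T, hTsub, hTcard, W, hWsub, hWcard, hTW⟩ :=
    core_lemma A U (fun m => U.filter (fun j => c m j = κ0)) D s' t' hD
      (fun m _ => filter_subset _ _) hAspec (by omega) hs' (by rwa [hAcard])
  refine ⟨T, hTsub.trans (hAsub.trans (filter_subset _ _)), hTcard, W, hWsub, hWcard, κ0, ?_⟩
  intro m hm j hj
  exact (mem_filter.1 (hTW m hm j hj)).2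


def DD (s t : ℕ) : ℕ := 2^(s+2) * s^2 * t
def XR (s t : ℕ) : ℕ := 2 * s * DD s t
def XC (s t : ℕ) : ℕ := 8 * s * t
def NRQ (s t : ℕ) : ℕ := 2 * DD s t * ((t - 1) * ((XR s t).choose s) + 1)
def NN1 (s t : ℕ) : ℕ := NRQ s t + 4 * XC s t
def MRQ (s t : ℕ) : ℕ := 8 * s * ((s - 1) * ((XC s t).choose t) + 1) + 2 * s
def MM1 (s t : ℕ) : ℕ := XR s t + MRQ s t

theorem grid_thm (s t r : ℕ) (hs : 1 ≤ s) (ht : 1 ≤ t) (hr : 1 ≤ r)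
    (c : Fin (MM1 s t * r) → Fin (NN1 s t * r) → Fin r) :
    ∃ I : Finset (Fin (MM1 s t * r)), ∃ J : Finset (Fin (NN1 s t * r)),
      I.card = s ∧ J.card = t ∧
      ((∃ κ, ∀ i ∈ I, ∀ j ∈ J, c i j = κ) ∨
       (∀ i ∈ I, ∀ i' ∈ I, ∀ j ∈ J, ∀ j' ∈ J, (i, j) ≠ (i', j') → c i j ≠ c i' j')) := by
  classical
  have hDdpos : 0 < DD s t := by
    unfold DD
    exact Nat.mul_pos (Nat.mul_pos (Nat.pow_pos (by omega)) (pow_pos (by omega) 2)) ht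
  have hDd1 : 1 ≤ DD s t := hDdpos
  have hFinr : Nonempty (Fin r) := ⟨⟨0, hr⟩⟩
  have hcardFinr : Fintype.card (Fin r) = r := Fintype.card_fin r
  set CR := (univ : Finset (Fin (MM1 s t * r))).filter
      (fun i => ∃ κ : Fin r, NN1 s t * r ≤
        DD s t * ((univ : Finset (Fin (NN1 s t * r))).filter (fun j => c i j = κ)).card)
      with hCRdef
  by_cases hCRbig : XR s t * r ≤ CR.card
  · obtain ⟨T, _, hTcard, W, _, hWcard, κ0, hmono⟩ :=
      mono_of_many_concentrated c univ CR (DD s t) s t (XR s t) hDd1 hs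
        (by rw [hcardFinr]; exact hr) (le_of_eq rfl)
        (fun m hm => by
          have h2 := (mem_filter.1 hm).2
          simpa [card_univ, Fintype.card_fin] using h2)
        (by rw [hcardFinr]; exact hCRbig)
        (by
          rw [card_univ, Fintype.card_fin]
          calc 2 * DD s t * ((t - 1) * ((XR s t).choose s) + 1) = NRQ s t := rfl
            _ ≤ NN1 s t := Nat.le_add_right _ _
            _ ≤ NN1 s t * r := Nat.le_mul_of_pos_right _ (by omega))
    exact ⟨T, W, hTcard, hWcard, Or.inl ⟨κ0, hmono⟩⟩
  · have hCRsmall : CR.card < XR s t * r := Nat.lt_of_not_le hCRbig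
    set R := (univ : Finset (Fin (MM1 s t * r))) \ CR with hRdef
    have hRcard : MRQ s t * r ≤ R.card := by
      rw [hRdef, card_sdiff_of_subset (subset_univ _), card_univ, Fintype.card_fin]
      have hMM : MM1 s t * r = XR s t * r + MRQ s t * r := by unfold MM1; ring
      omega
    have hRnonconc : ∀ i ∈ R, ∀ κ : Fin r,
        DD s t * ((univ : Finset (Fin (NN1 s t * r))).filter (fun j => c i j = κ)).card
          < NN1 s t * r := by
      intro i hi κ
      have hnot : i ∉ CR := (mem_sdiff.1 hi).2
      rw [hCRdef, mem_filter] at hnot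
      push_neg at hnot
      exact hnot (mem_univ i) κ
    set CC := (univ : Finset (Fin (NN1 s t * r))).filter
        (fun j => ∃ κ : Fin r, R.card ≤ 4 * s * (R.filter (fun i => c i j = κ)).card)
        with hCCdef
    by_cases hCCbig : XC s t * r ≤ CC.card
    · obtain ⟨T, _, hTcard, W, hWsub, hWcard, κ0, hmono⟩ :=
        mono_of_many_concentrated (fun j i => c i j) R CC (4 * s) t s (XC s t)
          (by omega) ht (by rw [hcardFinr]; exact hr)
          (le_of_eq (by unfold XC; ring))
          (fun m hm => (mem_filter.1 hm).2)
          (by rw [hcardFinr]; exact hCCbig)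
          (by
            calc 2 * (4 * s) * ((s - 1) * ((XC s t).choose t) + 1)
                = 8 * s * ((s - 1) * ((XC s t).choose t) + 1) := by ring
              _ ≤ MRQ s t := by unfold MRQ; omega
              _ ≤ MRQ s t * r := Nat.le_mul_of_pos_right _ (by omega)
              _ ≤ R.card := hRcard)
      exact ⟨W, T, hWcard, hTcard, Or.inl ⟨κ0, fun i hi j hj => hmono j hj i hi⟩⟩
    · have hCCsmall : CC.card < XC s t * r := Nat.lt_of_not_le hCCbig
      set Sc := (univ : Finset (Fin (NN1 s t * r))) \ CC with hScdef
      have hSccard : NRQ s t * r + 3 * (XC s t * r) ≤ Sc.card := by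
        rw [hScdef, card_sdiff_of_subset (subset_univ _), card_univ, Fintype.card_fin]
        have hNN : NN1 s t * r = NRQ s t * r + 4 * (XC s t * r) := by unfold NN1; ring
        omega
      have hScnonconc : ∀ j ∈ Sc, ∀ v : Fin r,
          4 * s * (R.filter (fun i => c i j = v)).card < R.card := by
        intro j hj v
        have hnot : j ∉ CC := (mem_sdiff.1 hj).2
        rw [hCCdef, mem_filter] at hnot
        push_neg at hnot
        exact hnot (mem_univ j) v
      have hR2s : 2 * s ≤ R.card := by
        have h1 : 2 * s ≤ MRQ s t := by unfold MRQ; omega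
        have h2 : MRQ s t ≤ MRQ s t * r := Nat.le_mul_of_pos_right _ (by omega)
        omega
      obtain ⟨I, hIR, hIcard, J3, hJ3S, hJ3card, hinj⟩ :=
        greedy_one c R Sc s hs hR2s hScnonconc s le_rfl
      have hNRQ1 : 1 ≤ NRQ s t := by
        have : 0 < 2 * DD s t * ((t - 1) * ((XR s t).choose s) + 1) :=
          Nat.mul_pos (by omega) (Nat.succ_pos _)
        unfold NRQ
        omega
      have hN1 : 1 ≤ NN1 s t * r := by
        have h1 : NRQ s t ≤ NN1 s t := Nat.le_add_right _ _
        have h2 : NN1 s t ≤ NN1 s t * r := Nat.le_mul_of_pos_right _ (by omega)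
        omega
      have hJ3big : 3 * (NN1 s t * r) ≤ 2^(s+2) * J3.card := by
        have h1 : 4 * Sc.card ≤ 4 * (2^s * J3.card) := Nat.mul_le_mul_left _ hJ3card
        have h2 : 4 * (2^s * J3.card) = 2^(s+2) * J3.card := by
          rw [pow_add]; ring
        have h3 : NN1 s t * r = NRQ s t * r + 4 * (XC s t * r) := by unfold NN1; ring
        omega
      have hrowI : ∀ i ∈ I, ∀ κ : Fin r, 2^(s+2) * s^2 * t *
          ((univ : Finset (Fin (NN1 s t * r))).filter (fun j => c i j = κ)).card
            < NN1 s t * r := by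
        intro i hi κ
        have h := hRnonconc i (hIR hi) κ
        unfold DD at h
        exact h
      obtain ⟨Js, hJsSub, hJscard, hJsprop⟩ :=
        greedy_two c I J3 s t (NN1 s t * r) hs ht hN1 hIcard hrowI hJ3big t le_rfl
      refine ⟨I, Js, hIcard, hJscard, Or.inr ?_⟩
      intro i hi i' hi' j hj j' hj' hne
      by_cases hjj : j = j'
      · subst hjj
        have hii : i ≠ i' := fun h => hne (by rw [h])
        exact hinj j (hJsSub hj) i hi i' hi' hii
      · exact hJsprop j hj j' hj' hjj i hi i' hi'

noncomputable section

lemma castAdd_ne_natAdd' {s t : ℕ} (α : Fin s) (β : Fin t) :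
    Fin.castAdd t α ≠ Fin.natAdd s β := by
  intro h
  have h1 := congrArg Fin.val h
  simp at h1
  omega

lemma natAdd_inj' {s t : ℕ} {β β' : Fin t} :
    Fin.natAdd s β = Fin.natAdd s β' ↔ β = β' := by
  simp [Fin.ext_iff]

lemma pyth_support {n : ℕ} (p q : EuclideanSpace ℝ (Fin n))
    (h : ∀ k, p k = 0 ∨ q k = 0) : ‖p + q‖^2 = ‖p‖^2 + ‖q‖^2 := by
  have hinner : (inner ℝ p q : ℝ) = 0 := by
    rw [PiLp.inner_apply]
    apply Finset.sum_eq_zero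
    intro k _
    rcases h k with h0 | h0 <;> simp [h0]
  rw [norm_add_sq_real, hinner]
  ring

lemma norm_sq_single_sub {n : ℕ} (i j : Fin n) (u : ℝ) :
    ‖(EuclideanSpace.single i u - EuclideanSpace.single j u : EuclideanSpace ℝ (Fin n))‖^2
      = if i = j then 0 else 2 * u^2 := by
  by_cases hij : i = j
  · subst hij; simp
  · rw [if_neg hij]
    have hneg : (EuclideanSpace.single i u - EuclideanSpace.single j u : EuclideanSpace ℝ (Fin n))
        = EuclideanSpace.single i u + EuclideanSpace.single j (-u) := by
      ext k
      simp only [PiLp.sub_apply, PiLp.add_apply, EuclideanSpace.single_apply]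
      split_ifs <;> ring
    rw [hneg, pyth_support]
    · rw [EuclideanSpace.norm_single, EuclideanSpace.norm_single]
      simp only [Real.norm_eq_abs, norm_neg, sq_abs]
      ring
    · intro k
      by_cases hk : k = i
      · right; subst hk
        simp [EuclideanSpace.single_apply, hij]
      · left; simp [EuclideanSpace.single_apply, hk]

lemma dist_pair_pair {n : ℕ} {i₁ j₁ i₂ j₂ : Fin n} (u v : ℝ)
    (h₁ : i₁ ≠ j₁) (h₂ : i₂ ≠ j₂) (h₃ : i₁ ≠ j₂) (h₄ : i₂ ≠ j₁) :
    dist (EuclideanSpace.single i₁ u + EuclideanSpace.single j₁ v)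
         (EuclideanSpace.single i₂ u + EuclideanSpace.single j₂ v)
      = Real.sqrt ((if i₁ = i₂ then 0 else 2 * u^2) + (if j₁ = j₂ then 0 else 2 * v^2)) := by
  rw [dist_eq_norm]
  have hsplit : (EuclideanSpace.single i₁ u + EuclideanSpace.single j₁ v)
        - (EuclideanSpace.single i₂ u + EuclideanSpace.single j₂ v)
      = (EuclideanSpace.single i₁ u - EuclideanSpace.single i₂ u)
        + ((EuclideanSpace.single j₁ v - EuclideanSpace.single j₂ v)
          : EuclideanSpace ℝ (Fin n)) := by
    abel
  rw [hsplit]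
  have hperp : ∀ k, (EuclideanSpace.single i₁ u - EuclideanSpace.single i₂ u
        : EuclideanSpace ℝ (Fin n)) k = 0 ∨
      (EuclideanSpace.single j₁ v - EuclideanSpace.single j₂ v
        : EuclideanSpace ℝ (Fin n)) k = 0 := by
    intro k
    by_cases hk1 : k = i₁
    · right; subst hk1
      simp only [PiLp.sub_apply, EuclideanSpace.single_apply, if_neg h₁, if_neg h₃, sub_zero]
    · by_cases hk2 : k = i₂
      · right; subst hk2
        simp only [PiLp.sub_apply, EuclideanSpace.single_apply, if_neg h₄, if_neg h₂, sub_zero]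
      · left
        simp only [PiLp.sub_apply, EuclideanSpace.single_apply, if_neg hk1, if_neg hk2, sub_zero]
  have hn : ‖(EuclideanSpace.single i₁ u - EuclideanSpace.single i₂ u)
        + ((EuclideanSpace.single j₁ v - EuclideanSpace.single j₂ v)
          : EuclideanSpace ℝ (Fin n))‖^2
      = (if i₁ = i₂ then 0 else 2 * u^2) + (if j₁ = j₂ then 0 else 2 * v^2) := by
    rw [pyth_support _ _ hperp, norm_sq_single_sub, norm_sq_single_sub]
  rw [← hn, Real.sqrt_sq (norm_nonneg _)]

def Epoint (s t : ℕ) (a b : ℝ) (α : Fin s) (β : Fin t) : EuclideanSpace ℝ (Fin (s + t)) :=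
  EuclideanSpace.single (Fin.castAdd t α) (a / Real.sqrt 2) +
    EuclideanSpace.single (Fin.natAdd s β) (b / Real.sqrt 2)

lemma Epoint_apply_castAdd (s t : ℕ) (a b : ℝ) (α : Fin s) (β : Fin t) (α' : Fin s) :
    Epoint s t a b α β (Fin.castAdd t α') = if α' = α then a / Real.sqrt 2 else 0 := by
  simp only [Epoint, PiLp.add_apply, EuclideanSpace.single_apply,
    if_neg (castAdd_ne_natAdd' α' β), add_zero, Fin.castAdd_inj]

lemma Epoint_apply_natAdd (s t : ℕ) (a b : ℝ) (α : Fin s) (β : Fin t) (β' : Fin t) :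
    Epoint s t a b α β (Fin.natAdd s β') = if β' = β then b / Real.sqrt 2 else 0 := by
  have hne : Fin.natAdd s β' ≠ Fin.castAdd t α := (castAdd_ne_natAdd' α β').symm
  simp only [Epoint, PiLp.add_apply, EuclideanSpace.single_apply, if_neg hne, zero_add,
    natAdd_inj']

lemma mem_Q_iff {s t : ℕ} (a b : ℝ) (z : EuclideanSpace ℝ (Fin (s + t))) :
    z ∈ cartesianProd (simplexVertices s a) (simplexVertices t b) ↔
      ∃ α β, z = Epoint s t a b α β := by
  constructor
  · rintro ⟨x, hx, y, hy, hzx, hzy⟩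
    obtain ⟨α, rfl⟩ := hx
    obtain ⟨β, rfl⟩ := hy
    refine ⟨α, β, ?_⟩
    ext k
    refine Fin.addCases (fun i => ?_) (fun j => ?_) k
    · rw [hzx i, Epoint_apply_castAdd]
      exact EuclideanSpace.single_apply _ _ _
    · rw [hzy j, Epoint_apply_natAdd]
      exact EuclideanSpace.single_apply _ _ _
  · rintro ⟨α, β, rfl⟩
    refine ⟨EuclideanSpace.single α (a / Real.sqrt 2), ⟨α, rfl⟩,
      EuclideanSpace.single β (b / Real.sqrt 2), ⟨β, rfl⟩, fun i => ?_, fun j => ?_⟩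
    · rw [Epoint_apply_castAdd]
      exact (EuclideanSpace.single_apply _ _ _).symm
    · rw [Epoint_apply_natAdd]
      exact (EuclideanSpace.single_apply _ _ _).symm

end

end AuxGallai

/-- For positive integers `s, t` and side lengths `a, b > 0`, let `Q ⊆ E^{s+t}` be the
Cartesian product of the vertex set of a regular `(s-1)`-simplex of side length `a` and the
vertex set of a regular `(t-1)`-simplex of side length `b`. Then there is a constant `C`
such that for every positive integer `r`, every `r`-coloring of `E^{C·r}` contains a
monochromatic or rainbow congruent copy of `Q`. -/
theorem euclidean_gallai_ramsey_simplex_product (s t : ℕ) (hs : 0 < s) (ht : 0 < t)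
    (a b : ℝ) (ha : 0 < a) (hb : 0 < b) :
    ∃ C : ℕ, ∀ r : ℕ, 0 < r → ∀ χ : EuclideanSpace ℝ (Fin (C * r)) → Fin r,
      HasMonoCopy χ (cartesianProd (simplexVertices s a) (simplexVertices t b)) ∨
      HasRainbowCopy χ (cartesianProd (simplexVertices s a) (simplexVertices t b)) := by
  classical
  refine ⟨MM1 s t + NN1 s t, ?_⟩
  intro r hr χ
  have hdim : (MM1 s t + NN1 s t) * r = MM1 s t * r + NN1 s t * r := add_mul _ _ _
  have hgi : ∀ i : Fin (MM1 s t * r), (i : ℕ) < (MM1 s t + NN1 s t) * r := by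
    intro i; have := i.isLt; omega
  have hgj : ∀ j : Fin (NN1 s t * r), MM1 s t * r + (j : ℕ) < (MM1 s t + NN1 s t) * r := by
    intro j; have := j.isLt; omega
  set gi : Fin (MM1 s t * r) → Fin ((MM1 s t + NN1 s t) * r) :=
    fun i => ⟨i, hgi i⟩ with hgidef
  set gj : Fin (NN1 s t * r) → Fin ((MM1 s t + NN1 s t) * r) :=
    fun j => ⟨MM1 s t * r + j, hgj j⟩ with hgjdef
  have hgigj : ∀ i j, gi i ≠ gj j := by
    intro i j h
    have h1 := congrArg Fin.val h
    simp only [hgidef, hgjdef] at h1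
    have := i.isLt
    omega
  have hgiinj : ∀ i i', gi i = gi i' ↔ i = i' := by
    intro i i'
    constructor
    · intro h
      have h1 := congrArg Fin.val h
      simp only [hgidef] at h1
      exact Fin.ext h1
    · intro h; rw [h]
  have hgjinj : ∀ j j', gj j = gj j' ↔ j = j' := by
    intro j j'
    constructor
    · intro h
      have h1 := congrArg Fin.val h
      simp only [hgjdef] at h1
      exact Fin.ext (by omega)
    · intro h; rw [h]
  set P : Fin (MM1 s t * r) → Fin (NN1 s t * r) →
      EuclideanSpace ℝ (Fin ((MM1 s t + NN1 s t) * r)) :=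
    fun i j => EuclideanSpace.single (gi i) (a / Real.sqrt 2)
      + EuclideanSpace.single (gj j) (b / Real.sqrt 2) with hPdef
  obtain ⟨I, J, hIcard, hJcard, hor⟩ := grid_thm s t r hs ht hr (fun i j => χ (P i j))
  set ι₁ := I.orderEmbOfFin hIcard with hι₁def
  set ι₂ := J.orderEmbOfFin hJcard with hι₂def
  set Af : EuclideanSpace ℝ (Fin (s + t)) → Fin s := fun z =>
    if h : ∃ α : Fin s, z (Fin.castAdd t α) ≠ 0 then h.choose else ⟨0, hs⟩ with hAdef
  set Bf : EuclideanSpace ℝ (Fin (s + t)) → Fin t := fun z =>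
    if h : ∃ β : Fin t, z (Fin.natAdd s β) ≠ 0 then h.choose else ⟨0, ht⟩ with hBdef
  set f : EuclideanSpace ℝ (Fin (s + t)) → EuclideanSpace ℝ (Fin ((MM1 s t + NN1 s t) * r)) :=
    fun z => P (ι₁ (Af z)) (ι₂ (Bf z)) with hfdef
  have ha2 : a / Real.sqrt 2 ≠ 0 := by
    apply div_ne_zero (ne_of_gt ha)
    rw [Real.sqrt_ne_zero']
    norm_num
  have hb2 : b / Real.sqrt 2 ≠ 0 := by
    apply div_ne_zero (ne_of_gt hb)
    rw [Real.sqrt_ne_zero']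
    norm_num
  have hAf : ∀ (α : Fin s) (β : Fin t), Af (Epoint s t a b α β) = α := by
    intro α β
    have hex : ∃ α' : Fin s, Epoint s t a b α β (Fin.castAdd t α') ≠ 0 :=
      ⟨α, by rw [Epoint_apply_castAdd, if_pos rfl]; exact ha2⟩
    rw [hAdef]
    simp only [dif_pos hex]
    have hspec := hex.choose_spec
    rw [Epoint_apply_castAdd] at hspec
    by_contra hne
    rw [if_neg hne] at hspec
    exact hspec rfl
  have hBf : ∀ (α : Fin s) (β : Fin t), Bf (Epoint s t a b α β) = β := by
    intro α β
    have hex : ∃ β' : Fin t, Epoint s t a b α β (Fin.natAdd s β') ≠ 0 :=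
      ⟨β, by rw [Epoint_apply_natAdd, if_pos rfl]; exact hb2⟩
    rw [hBdef]
    simp only [dif_pos hex]
    have hspec := hex.choose_spec
    rw [Epoint_apply_natAdd] at hspec
    by_contra hne
    rw [if_neg hne] at hspec
    exact hspec rfl
  have hfE : ∀ (α : Fin s) (β : Fin t),
      f (Epoint s t a b α β) = P (ι₁ α) (ι₂ β) := by
    intro α β
    rw [hfdef]
    simp only
    rw [hAf, hBf]
  have h2sq : Real.sqrt 2 ^ 2 = 2 := Real.sq_sqrt (by norm_num)
  have hu2 : 2 * (a / Real.sqrt 2)^2 = a^2 := by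
    rw [div_pow, h2sq]
    ring
  have hv2 : 2 * (b / Real.sqrt 2)^2 = b^2 := by
    rw [div_pow, h2sq]
    ring
  have hQdist : ∀ (α α' : Fin s) (β β' : Fin t),
      dist (Epoint s t a b α β) (Epoint s t a b α' β')
        = Real.sqrt ((if α = α' then 0 else a^2) + (if β = β' then 0 else b^2)) := by
    intro α α' β β'
    unfold Epoint
    rw [dist_pair_pair _ _ (castAdd_ne_natAdd' _ _) (castAdd_ne_natAdd' _ _)
      (castAdd_ne_natAdd' _ _) (castAdd_ne_natAdd' _ _)]
    have e1 : (if Fin.castAdd t α = Fin.castAdd t α' then (0:ℝ) else 2 * (a / Real.sqrt 2)^2)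
        = if α = α' then 0 else a^2 := by
      by_cases h : α = α'
      · subst h; rw [if_pos rfl, if_pos rfl]
      · rw [if_neg h, if_neg (fun hc => h (Fin.castAdd_inj.mp hc)), hu2]
    have e2 : (if Fin.natAdd s β = Fin.natAdd s β' then (0:ℝ) else 2 * (b / Real.sqrt 2)^2)
        = if β = β' then 0 else b^2 := by
      by_cases h : β = β'
      · subst h; rw [if_pos rfl, if_pos rfl]
      · rw [if_neg h, if_neg (fun hc => h (natAdd_inj'.mp hc)), hv2]
    rw [e1, e2]
  have hPdist : ∀ i i' j j',
      dist (P i j) (P i' j')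
        = Real.sqrt ((if i = i' then 0 else a^2) + (if j = j' then 0 else b^2)) := by
    intro i i' j j'
    rw [hPdef]
    simp only
    rw [dist_pair_pair _ _ (hgigj _ _) (hgigj _ _) (hgigj _ _) (hgigj _ _)]
    have e1 : (if gi i = gi i' then (0:ℝ) else 2 * (a / Real.sqrt 2)^2)
        = if i = i' then 0 else a^2 := by
      by_cases h : i = i'
      · subst h; rw [if_pos rfl, if_pos rfl]
      · rw [if_neg h, if_neg (fun hc => h ((hgiinj _ _).mp hc)), hu2]
    have e2 : (if gj j = gj j' then (0:ℝ) else 2 * (b / Real.sqrt 2)^2)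
        = if j = j' then 0 else b^2 := by
      by_cases h : j = j'
      · subst h; rw [if_pos rfl, if_pos rfl]
      · rw [if_neg h, if_neg (fun hc => h ((hgjinj _ _).mp hc)), hv2]
    rw [e1, e2]
  have hcong : IsCongruentCopy (cartesianProd (simplexVertices s a) (simplexVertices t b)) f := by
    intro x hx y hy
    rw [mem_Q_iff] at hx hy
    obtain ⟨α, β, rfl⟩ := hx
    obtain ⟨α', β', rfl⟩ := hy
    rw [hfE, hfE, hPdist, hQdist]
    have e1 : (if ι₁ α = ι₁ α' then (0:ℝ) else a^2) = if α = α' then 0 else a^2 := by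
      by_cases h : α = α'
      · subst h; rw [if_pos rfl, if_pos rfl]
      · rw [if_neg h, if_neg (fun hc => h (ι₁.injective hc))]
    have e2 : (if ι₂ β = ι₂ β' then (0:ℝ) else b^2) = if β = β' then 0 else b^2 := by
      by_cases h : β = β'
      · subst h; rw [if_pos rfl, if_pos rfl]
      · rw [if_neg h, if_neg (fun hc => h (ι₂.injective hc))]
    rw [e1, e2]
  rcases hor with ⟨κ0, hmono⟩ | hrain
  · left
    refine ⟨f, hcong, κ0, ?_⟩
    intro x hx
    rw [mem_Q_iff] at hx
    obtain ⟨α, β, rfl⟩ := hx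
    rw [hfE]
    exact hmono (ι₁ α) (I.orderEmbOfFin_mem hIcard α) (ι₂ β) (J.orderEmbOfFin_mem hJcard β)
  · right
    refine ⟨f, hcong, ?_⟩
    intro x hx y hy hxy
    rw [mem_Q_iff] at hx hy
    obtain ⟨α, β, rfl⟩ := hx
    obtain ⟨α', β', rfl⟩ := hy
    rw [hfE, hfE]
    refine hrain (ι₁ α) (I.orderEmbOfFin_mem hIcard α) (ι₁ α') (I.orderEmbOfFin_mem hIcard α')
      (ι₂ β) (J.orderEmbOfFin_mem hJcard β) (ι₂ β') (J.orderEmbOfFin_mem hJcard β') ?_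
    intro hpair
    have h1 : ι₁ α = ι₁ α' := congrArg Prod.fst hpair
    have h2 : ι₂ β = ι₂ β' := congrArg Prod.snd hpair
    exact hxy (by rw [ι₁.injective h1, ι₂.injective h2])
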